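/- Let N ≥ 2, c > 0, b ∈ (0,1), and b₁ = (1−b)/N. Let A be the N×N real matrix whose first column is (b₁, …, b₁, b₁+b)ᵀ, with A_{i,i+1} = 1 for 1 ≤ i ≤ N−1 and all other entries 0. Define x* ∈ ℝ^N by x*_n = (b + (N−n+1)(1−b)/N) · c / (Nb + (N+1)(1−b)/2) for n = 1,…,N. Then A x* = x*, Σₙ x*_n = c, x*_1 ≥ x*_2 ≥ … ≥ x*_N > 0, and x*_N > b x*_1. -/

import Mathlib

/-- The explicit vector `x*` with
`x*_n = (b + (N-n+1)(1-b)/N) · c / (Nb + (N+1)(1-b)/2)` is a fixed point of the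
AIMD index-policy matrix `A`, sums to `c`, is ordered decreasingly with
positive entries, and satisfies `x*_N > b x*_1`.  (Coordinates are indexed by
`Fin N`, the coordinate `i` corresponding to `n = i + 1`.) -/
theorem aimd_fixed_point
    (N : ℕ) (hN : 2 ≤ N) (c b : ℝ) (hc : 0 < c) (hb : b ∈ Set.Ioo (0 : ℝ) 1)
    (b₁ : ℝ) (hb₁ : b₁ = (1 - b) / N)
    (A : Matrix (Fin N) (Fin N) ℝ)
    (hA : ∀ i j : Fin N, A i j =
      if (j : ℕ) = 0 then (if (i : ℕ) = N - 1 then b₁ + b else b₁)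
      else if (j : ℕ) = (i : ℕ) + 1 then 1 else 0)
    (xstar : Fin N → ℝ)
    (hxstar : ∀ i : Fin N, xstar i =
      (b + ((N : ℝ) - (i : ℕ)) * (1 - b) / N) * c
        / ((N : ℝ) * b + ((N : ℝ) + 1) * (1 - b) / 2)) :
    A.mulVec xstar = xstar
    ∧ ∑ i, xstar i = c
    ∧ (∀ i j : Fin N, i ≤ j → xstar j ≤ xstar i)
    ∧ (∀ i, 0 < xstar i)
    ∧ b * xstar ⟨0, by omega⟩ < xstar ⟨N - 1, by omega⟩ := by
  obtain ⟨hb0, hb1⟩ := hb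
  have hNR : (2 : ℝ) ≤ (N : ℝ) := by exact_mod_cast hN
  have hN0 : (N : ℝ) ≠ 0 := by linarith
  have h1b : 0 < 1 - b := by linarith
  set D : ℝ := (N : ℝ) * b + ((N : ℝ) + 1) * (1 - b) / 2 with hDdef
  have hDpos : 0 < D := by
    rw [hDdef]
    have h1 : 0 < (N : ℝ) * b := by nlinarith
    have h2 : 0 < ((N : ℝ) + 1) * (1 - b) / 2 := by nlinarith
    linarith
  have hD0 : D ≠ 0 := ne_of_gt hDpos
  -- positivity of entries
  have hpos : ∀ i : Fin N, 0 < xstar i := by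
    intro i
    rw [hxstar]
    have hiN : ((i : ℕ) : ℝ) < (N : ℝ) := by exact_mod_cast i.isLt
    have hnum : 0 < b + ((N : ℝ) - (i : ℕ)) * (1 - b) / N := by
      have : 0 < ((N : ℝ) - (i : ℕ)) * (1 - b) / N := by
        apply div_pos (mul_pos (by linarith) h1b) (by linarith)
      linarith
    exact div_pos (mul_pos hnum hc) hDpos
  -- monotonicity
  have hmono : ∀ i j : Fin N, i ≤ j → xstar j ≤ xstar i := by
    intro i j hij
    rw [hxstar, hxstar]
    have hij' : ((i : ℕ) : ℝ) ≤ ((j : ℕ) : ℝ) := by exact_mod_cast hij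
    gcongr <;> linarith
  -- fixed point
  have hmul : A.mulVec xstar = xstar := by
    funext i
    have hiN : (i : ℕ) < N := i.isLt
    have hcast : ((i : ℕ) : ℝ) < (N : ℝ) := by exact_mod_cast hiN
    show ∑ j, A i j * xstar j = xstar i
    have hsplit : ∀ j : Fin N, A i j * xstar j =
        (if j = (⟨0, by omega⟩ : Fin N) then
            (if (i : ℕ) = N - 1 then b₁ + b else b₁) * xstar j else 0)
        + (if (j : ℕ) = (i : ℕ) + 1 then xstar j else 0) := by
      intro j
      rw [hA]
      by_cases hj0 : (j : ℕ) = 0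
      · have hj : j = (⟨0, by omega⟩ : Fin N) := Fin.ext hj0
        have hne : ¬ ((j : ℕ) = (i : ℕ) + 1) := by omega
        simp [hj0, hj, hne]
      · have hj : ¬ j = (⟨0, by omega⟩ : Fin N) := by
          intro h; apply hj0; rw [h]
        simp only [hj0, if_false, hj]
        split_ifs <;> ring
    rw [Finset.sum_congr rfl (fun j _ => hsplit j), Finset.sum_add_distrib,
      Finset.sum_ite_eq' Finset.univ]
    simp only [Finset.mem_univ, if_true]
    by_cases hlast : (i : ℕ) + 1 < N
    · -- not the last row
      have hine : ¬ ((i : ℕ) = N - 1) := by omega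
      have hcond : ∀ j : Fin N, ((j : ℕ) = (i : ℕ) + 1) ↔ j = ⟨(i : ℕ) + 1, hlast⟩ := by
        intro j
        constructor
        · intro h; exact Fin.ext h
        · intro h; rw [h]
      simp only [hcond]
      rw [Finset.sum_ite_eq' Finset.univ]
      simp only [Finset.mem_univ, if_true, hine, if_false]
      rw [hxstar, hxstar, hxstar, hb₁]
      push_cast
      field_simp
      ring
    · -- last row
      have hieq : (i : ℕ) = N - 1 := by omega
      have hzero : ∑ j : Fin N, (if (j : ℕ) = (i : ℕ) + 1 then xstar j else 0) = 0 := by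
        apply Finset.sum_eq_zero
        intro j _
        have : ¬ ((j : ℕ) = (i : ℕ) + 1) := by have := j.isLt; omega
        simp [this]
      rw [hzero]
      simp only [hieq, if_true]
      rw [hxstar, hxstar, hb₁]
      have hicast : ((i : ℕ) : ℝ) = (N : ℝ) - 1 := by
        rw [hieq]; push_cast [Nat.cast_sub (by omega : 1 ≤ N)]; ring
      rw [hicast]
      have hz : (((⟨0, by omega⟩ : Fin N) : ℕ) : ℝ) = 0 := by norm_num
      rw [hz]
      have hP : b + ((N : ℝ) - 0) * (1 - b) / N = 1 := by field_simp; ring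
      have h2 : (N : ℝ) - ((N : ℝ) - 1) = 1 := by ring
      rw [hP, h2]
      ring
  -- sum equals c
  have hsum : ∑ i, xstar i = c := by
    have hgauss : ∑ i : Fin N, (((i : ℕ) : ℝ)) = (N : ℝ) * ((N : ℝ) - 1) / 2 := by
      rw [Fin.sum_univ_eq_sum_range (fun k => ((k : ℕ) : ℝ)) N]
      have h4 := congrArg (Nat.cast : ℕ → ℝ) (Finset.sum_range_id_mul_two N)
      push_cast [Nat.cast_sub (by omega : 1 ≤ N)] at h4
      linarith
    have hstep : ∑ i : Fin N, xstar i
        = (∑ i : Fin N, (b + ((N : ℝ) - (i : ℕ)) * (1 - b) / N)) * (c / D) := by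
      rw [Finset.sum_mul]
      exact Finset.sum_congr rfl (fun i _ => by rw [hxstar]; ring)
    rw [hstep]
    have hfsum : ∑ i : Fin N, (b + ((N : ℝ) - (i : ℕ)) * (1 - b) / N) = D := by
      rw [Finset.sum_add_distrib]
      simp only [Finset.sum_const, Finset.card_univ, Fintype.card_fin, nsmul_eq_mul]
      have : ∑ i : Fin N, ((N : ℝ) - (i : ℕ)) * (1 - b) / N
          = (∑ i : Fin N, ((N : ℝ) - (i : ℕ))) * (1 - b) / N := by
        rw [Finset.sum_mul, Finset.sum_div]
      rw [this, Finset.sum_sub_distrib, hgauss]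
      simp only [Finset.sum_const, Finset.card_univ, Fintype.card_fin, nsmul_eq_mul]
      field_simp
      ring
    rw [hfsum]
    field_simp
  refine ⟨hmul, hsum, hmono, hpos, ?_⟩
  -- strict inequality
  rw [hxstar, hxstar]
  have hlastcast : (((⟨N - 1, by omega⟩ : Fin N) : ℕ) : ℝ) = (N : ℝ) - 1 := by
    simp only
    push_cast [Nat.cast_sub (by omega : 1 ≤ N)]
    ring
  have hzerocast : (((⟨0, by omega⟩ : Fin N) : ℕ) : ℝ) = 0 := by norm_num
  rw [hlastcast, hzerocast]
  have key : b * ((b + ((N : ℝ) - 0) * (1 - b) / N) * c) < (b + ((N : ℝ) - ((N : ℝ) - 1)) * (1 - b) / N) * c := by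
    have h1 : b + ((N : ℝ) - 0) * (1 - b) / N = 1 := by field_simp; ring
    have h2 : (N : ℝ) - ((N : ℝ) - 1) = 1 := by ring
    rw [h1, h2]
    have : 0 < 1 * (1 - b) / N := by positivity
    nlinarith
  rw [← mul_div_assoc]
  exact div_lt_div_of_pos_right key hDpos
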